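/- arXiv:1910.02164 — 2 statements merged into one kernel-verified Lean document; each statement's English description precedes it below -/
import Mathlib

section
/- Bounded-height refinement corollary: assuming ⟦A_max⟧ ≤ ⟦A_min⟧, there exists a computable k ∈ ℕ such that for every P ∈ Reachable (i.e., P = Prod(d) for some context d) and every term s, there exists a term t of height at most k and a real x such that t refines s for P with shift x. -/
/-- A ranked alphabet: symbols with arities. -/
structure RankedAlphabet where
  symb : Type
  ar : symb → ℕ

/-- Terms (finite ranked trees) over a ranked alphabet. -/
inductive Term (A : RankedAlphabet) : Type where
  | node (a : A.symb) (ts : Fin (A.ar a) → Term A) : Term A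

/-- Height of a term: length of the longest branch. -/
def Term.height {A : RankedAlphabet} : Term A → ℕ
  | .node _ ts => Finset.univ.sup fun i => (ts i).height + 1

/-- Size of a term: number of nodes. -/
def Term.size {A : RankedAlphabet} : Term A → ℕ
  | .node _ ts => 1 + ∑ i, (ts i).size

/-- A nondeterministic tree automaton with real weights on transitions and final states. -/
structure WTA (A : RankedAlphabet) (Q : Type) where
  trans : (a : A.symb) → (Fin (A.ar a) → Q) → Q → Prop
  wt : (a : A.symb) → (Fin (A.ar a) → Q) → Q → ℝ
  final : Q → Prop
  fwt : Q → ℝ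

/-- Runs of an automaton over a term, reaching a given state at the root. -/
inductive RunOf {A : RankedAlphabet} {Q : Type} (M : WTA A Q) : Term A → Q → Type where
  | node (a : A.symb) (ts : Fin (A.ar a) → Term A) (qs : Fin (A.ar a) → Q) (q : Q)
      (hq : M.trans a qs q) (rs : ∀ i, RunOf M (ts i) (qs i)) : RunOf M (.node a ts) q

/-- The weight of a run: sum of the weights of the transitions used. -/
def RunOf.wt {A : RankedAlphabet} {Q : Type} {M : WTA A Q} :
    {t : Term A} → {q : Q} → RunOf M t q → ℝ
  | _, _, .node a _ qs q _ rs => (∑ i, (rs i).wt) + M.wt a qs q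

/-- Contexts: terms with exactly one hole. -/
inductive Ctx (A : RankedAlphabet) : Type where
  | hole : Ctx A
  | node (a : A.symb) (i : Fin (A.ar a)) (c : Ctx A) (ts : Fin (A.ar a) → Term A) : Ctx A

/-- Plugging a term into the hole of a context. -/
def Ctx.plug {A : RankedAlphabet} : Ctx A → Term A → Term A
  | .hole, t => t
  | .node a i c ts, t => .node a (Function.update ts i (c.plug t))

/-- Composition of contexts: plugging the second context into the hole of the first. -/
def Ctx.comp {A : RankedAlphabet} : Ctx A → Ctx A → Ctx A
  | .hole, d => d
  | .node a i c ts, d => .node a i (c.comp d) ts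

/-- Iterated composition of a context with itself. -/
def Ctx.pow {A : RankedAlphabet} (m : Ctx A) : ℕ → Ctx A
  | 0 => .hole
  | n + 1 => m.comp (m.pow n)

/-- Runs over a context, from a state (at the hole) to a state (at the root). -/
inductive CRun {A : RankedAlphabet} {Q : Type} (M : WTA A Q) : Ctx A → Q → Q → Type where
  | hole (p : Q) : CRun M .hole p p
  | node (a : A.symb) (i : Fin (A.ar a)) (c : Ctx A) (ts : Fin (A.ar a) → Term A)
      (qs : Fin (A.ar a) → Q) (p q : Q)
      (hq : M.trans a qs q)
      (hc : CRun M c p (qs i))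
      (rs : ∀ j, j ≠ i → RunOf M (ts j) (qs j)) : CRun M (.node a i c ts) p q

/-- The weight of a run over a context. -/
def CRun.wt {A : RankedAlphabet} {Q : Type} {M : WTA A Q} :
    {c : Ctx A} → {p q : Q} → CRun M c p q → ℝ
  | _, _, _, .hole _ => 0
  | _, _, _, .node a i _ _ qs _ q _ hc rs =>
      (∑ j : {j // j ≠ i}, (rs j.1 j.2).wt) + M.wt a qs q + hc.wt

/-- Gluing a run over a context with a run over a term yields a run over the plugged term. -/
def CRun.glue {A : RankedAlphabet} {Q : Type} {M : WTA A Q} {t : Term A} :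
    {c : Ctx A} → {p q : Q} → CRun M c p q → RunOf M t p → RunOf M (c.plug t) q
  | _, _, _, .hole _, r => r
  | _, _, _, .node a i c ts qs _ q hq hc rs, r =>
      .node a (Function.update ts i (c.plug t)) qs q hq
        (fun j =>
          if h : j = i then
            cast (by subst h; rw [Function.update_self]) (CRun.glue hc r)
          else
            cast (congrArg (fun s => RunOf M s (qs j))
              (Function.update_of_ne h (c.plug t) ts).symm) (rs j h))

/-- Gluing runs over composed contexts. -/
def CRun.cglue {A : RankedAlphabet} {Q : Type} {M : WTA A Q} {d : Ctx A} {p : Q} :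
    {c : Ctx A} → {q r : Q} → CRun M c q r → CRun M d p q → CRun M (c.comp d) p r
  | _, _, _, .hole _, rd => rd
  | _, _, _, .node a i c ts qs _ r hq hc rs, rd =>
      .node a i (c.comp d) ts qs p r hq (hc.cglue rd) rs

/-- The `n`-fold iteration of a loop run over a context. -/
def CRun.pow {A : RankedAlphabet} {Q : Type} {M : WTA A Q} {m : Ctx A} {q : Q}
    (σ : CRun M m q q) : (n : ℕ) → CRun M (m.pow n) q q
  | 0 => .hole q
  | n + 1 => σ.cglue (σ.pow n)

/-- `x` is the weight of some accepting run of `M` over `t`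
(weight of the run plus the final-state weight). -/
def AccWeight {A : RankedAlphabet} {Q : Type} (M : WTA A Q) (t : Term A) (x : ℝ) : Prop :=
  ∃ (q : Q) (r : RunOf M t q), M.final q ∧ r.wt + M.fwt q = x

/-- `M` has some accepting run over `t`. -/
def HasAcc {A : RankedAlphabet} {Q : Type} (M : WTA A Q) (t : Term A) : Prop :=
  ∃ x, AccWeight M t x

/-- `f` is the max-plus semantics of `M`: `f t = ⊥` iff there is no accepting run,
and otherwise `f t` is the maximum weight of an accepting run. -/
def ComputesMax {A : RankedAlphabet} {Q : Type} (M : WTA A Q) (f : Term A → Option ℝ) : Prop :=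
  ∀ t, (f t = none ↔ ¬ HasAcc M t) ∧
    ∀ x, f t = some x → AccWeight M t x ∧ ∀ y, AccWeight M t y → y ≤ x

/-- `f` is the min-plus semantics of `M`. -/
def ComputesMin {A : RankedAlphabet} {Q : Type} (M : WTA A Q) (f : Term A → Option ℝ) : Prop :=
  ∀ t, (f t = none ↔ ¬ HasAcc M t) ∧
    ∀ x, f t = some x → AccWeight M t x ∧ ∀ y, AccWeight M t y → x ≤ y

/-- An automaton is unambiguous if every term has at most one accepting run. -/
def Unambiguous {A : RankedAlphabet} {Q : Type} (M : WTA A Q) : Prop :=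
  ∀ (t : Term A) (q q' : Q) (r : RunOf M t q) (r' : RunOf M t q'),
    M.final q → M.final q' → q = q' ∧ HEq r r'

/-- The order on `ℝ ∪ {⊥}` in which `⊥` is comparable only with itself. -/
def OLe : Option ℝ → Option ℝ → Prop
  | none, none => True
  | some x, some y => x ≤ y
  | _, _ => False

/-- Shifting a value of `ℝ ∪ {⊥}` by a real number. -/
def oshift (u : Option ℝ) (x : ℝ) : Option ℝ := u.map (· + x)

/-- The set of states reachable at the root by some run over `t`. -/
def reachSet {A : RankedAlphabet} {Q : Type} (M : WTA A Q) (t : Term A) : Set Q :=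
  {q | Nonempty (RunOf M t q)}

/-- The set of states at the hole from which there is an accepting run over the context `c`. -/
def prodSet {A : RankedAlphabet} {Q : Type} (M : WTA A Q) (c : Ctx A) : Set Q :=
  {p | ∃ q, M.final q ∧ Nonempty (CRun M c p q)}

section Bi
variable {A : RankedAlphabet} {Q1 Q2 : Type} (M1 : WTA A Q1) (M2 : WTA A Q2)

/-- Reachable states of the disjoint union of the two automata. -/
def biReach (t : Term A) : Set (Q1 ⊕ Q2) :=
  Sum.inl '' reachSet M1 t ∪ Sum.inr '' reachSet M2 t

/-- Productive states of the disjoint union of the two automata. -/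
def biProd (c : Ctx A) : Set (Q1 ⊕ Q2) :=
  Sum.inl '' prodSet M1 c ∪ Sum.inr '' prodSet M2 c

/-- Final states of the disjoint union of the two automata. -/
def biFinal : Set (Q1 ⊕ Q2) :=
  Sum.inl '' {q | M1.final q} ∪ Sum.inr '' {q | M2.final q}

/-- Transition relation of the disjoint union of the two automata. -/
def biTrans (a : A.symb) (qs : Fin (A.ar a) → Q1 ⊕ Q2) (q : Q1 ⊕ Q2) : Prop :=
  (∃ (qs' : Fin (A.ar a) → Q1) (q' : Q1),
      qs = Sum.inl ∘ qs' ∧ q = Sum.inl q' ∧ M1.trans a qs' q') ∨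
  (∃ (qs' : Fin (A.ar a) → Q2) (q' : Q2),
      qs = Sum.inr ∘ qs' ∧ q = Sum.inr q' ∧ M2.trans a qs' q')

/-- The family `Reachable` of sets of states of the form `Reach(t)`. -/
def ReachableSets : Set (Set (Q1 ⊕ Q2)) := {S | ∃ t, biReach M1 M2 t = S}

/-- The family `Productive` of sets of states of the form `Prod(c)`. -/
def ProductiveSets : Set (Set (Q1 ⊕ Q2)) := {S | ∃ c, biProd M1 M2 c = S}

/-- `t` refines `s` for `P` with shift `x`. -/
def Refines (P : Set (Q1 ⊕ Q2)) (t s : Term A) (x : ℝ) : Prop :=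
  biReach M1 M2 s = biReach M1 M2 t ∧
  (∀ p : Q1, Sum.inl p ∈ P → ∀ ρ : RunOf M1 s p, ∃ ρ' : RunOf M1 t p, ρ.wt ≤ ρ'.wt + x) ∧
  (∀ q : Q2, Sum.inr q ∈ P → ∀ τ : RunOf M2 s q, ∃ τ' : RunOf M2 t q, τ'.wt + x ≤ τ.wt)

end Bi

/-- Transitions of the product automaton `A_pro`, relative to a transition relation `Δ`. -/
def ProTrans {A : RankedAlphabet} {Q : Type}
    (Δ : ∀ a : A.symb, (Fin (A.ar a) → Q) → Q → Prop) (a : A.symb)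
    (RPs : Fin (A.ar a) → Set Q × Set Q) (RP : Set Q × Set Q) : Prop :=
  RP.1 = {r | ∃ rs, Δ a rs r ∧ ∀ j, rs j ∈ (RPs j).1} ∧
  ∀ i, (RPs i).2 =
    {ri | ∃ rs p, Δ a rs p ∧ rs i = ri ∧ (∀ j, j ≠ i → rs j ∈ (RPs j).1) ∧ p ∈ RP.2}


section Basics
variable {A : RankedAlphabet} {Q : Type} {M : WTA A Q}

lemma RunOf.wt_cast {t t' : Term A} {q : Q} (h : t = t')
    (e : RunOf M t q = RunOf M t' q) (r : RunOf M t q) : (cast e r).wt = r.wt := by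
  subst h; rw [cast_eq]

lemma CRun.wt_glue : ∀ {c : Ctx A} {p q : Q} (κ : CRun M c p q) {t : Term A}
    (r : RunOf M t p), (κ.glue r).wt = κ.wt + r.wt := by
  intro c p q κ
  induction κ with
  | hole p => intro t r; simp [CRun.glue, CRun.wt]; rfl
  | node a i c ts qs p q hq hc rs ih =>
    intro t r
    show (∑ j, _) + M.wt a qs q = ((∑ j : {j // j ≠ i}, (rs j.1 j.2).wt) + M.wt a qs q + hc.wt) + r.wt
    rw [← Finset.add_sum_erase _ _ (Finset.mem_univ i)]
    beta_reduce
    rw [dif_pos rfl]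
    rw [RunOf.wt_cast (Function.update_self i (c.plug t) ts).symm _ _, ih r]
    rw [Finset.sum_subtype (p := fun j => j ≠ i) _ (by simp) _]
    have e2 : ∀ j : {j // j ≠ i},
        (fun (j : Fin (A.ar a)) => (if h' : j = i then
            cast (by subst h'; rw [Function.update_self]) (CRun.glue hc r)
          else
            cast (congrArg (fun s => RunOf M s (qs j))
              (Function.update_of_ne h' (c.plug t) ts).symm) (rs j h')).wt) j.1
        = (rs j.1 j.2).wt := by
      intro j
      simp only
      rw [dif_neg j.2]
      exact RunOf.wt_cast (Function.update_of_ne j.2 (c.plug t) ts).symm _ _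
    rw [Fintype.sum_congr _ _ e2]
    ring

lemma CRun.wt_cglue : ∀ {c : Ctx A} {q r : Q} (κ : CRun M c q r) {d : Ctx A} {p : Q}
    (κ' : CRun M d p q), (κ.cglue κ').wt = κ.wt + κ'.wt := by
  intro c q r κ
  induction κ with
  | hole p => intro d p' κ'; simp [CRun.cglue, CRun.wt]; rfl
  | node a i c ts qs p q hq hc rs ih =>
    intro d p' κ'
    show (∑ j : {j // j ≠ i}, (rs j.1 j.2).wt) + M.wt a qs q + (hc.cglue κ').wt
      = ((∑ j : {j // j ≠ i}, (rs j.1 j.2).wt) + M.wt a qs q + hc.wt) + κ'.wt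
    rw [ih]; ring

lemma CRun.wt_pow {m : Ctx A} {q : Q} (σ : CRun M m q q) :
    ∀ n : ℕ, (σ.pow n).wt = n * σ.wt := by
  intro n
  induction n with
  | zero => simp [CRun.pow, CRun.wt]
  | succ n ih => show (σ.cglue (σ.pow n)).wt = _; rw [CRun.wt_cglue, ih]; push_cast; ring

lemma Ctx.plug_comp (c d : Ctx A) (v : Term A) :
    (c.comp d).plug v = c.plug (d.plug v) := by
  induction c with
  | hole => rfl
  | node a i c ts ih => show Term.node a _ = Term.node a _; rw [ih]

lemma exists_decomp : ∀ (c : Ctx A) (v : Term A) (q : Q) (ρ : RunOf M (c.plug v) q),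
    ∃ (p : Q) (κ : CRun M c p q) (rv : RunOf M v p), ρ.wt = κ.wt + rv.wt := by
  intro c
  induction c with
  | hole =>
    intro v q ρ
    exact ⟨q, CRun.hole q, ρ, by simp [CRun.wt]; rfl⟩
  | node a i c ts ih =>
    intro v q ρ
    cases ρ with
    | node _ _ qs _ hq rs =>
      have hup : Function.update ts i (c.plug v) i = c.plug v := Function.update_self _ _ _
      obtain ⟨p, κ, rv, hw⟩ := ih v (qs i) (cast (congrArg (RunOf M · (qs i)) hup.symm).symm (rs i))
      refine ⟨p, CRun.node a i c ts qs p q hq κ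
        (fun j hj => cast (congrArg (RunOf M · (qs j))
          (Function.update_of_ne hj (c.plug v) ts)) (rs j)), rv, ?_⟩
      set F : ∀ j : Fin (A.ar a), j ≠ i → RunOf M (ts j) (qs j) := fun j hj =>
        cast (congrArg (RunOf M · (qs j)) (Function.update_of_ne hj (c.plug v) ts)) (rs j)
        with hF
      have hFw : ∀ (j) (hj : j ≠ i), (F j hj).wt = (rs j).wt := by
        intro j hj
        rw [hF]
        exact RunOf.wt_cast (Function.update_of_ne hj (c.plug v) ts) _ _
      show (∑ j, (rs j).wt) + M.wt a qs q
        = ((∑ j : {j // j ≠ i}, (F j.1 j.2).wt) + M.wt a qs q + κ.wt) + rv.wt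
      rw [show (∑ j : {j // j ≠ i}, (F j.1 j.2).wt) = ∑ j : {j // j ≠ i}, (rs j.1).wt from
        Fintype.sum_congr _ _ (fun j => hFw j.1 j.2)]
      rw [← Finset.add_sum_erase _ _ (Finset.mem_univ i)]
      rw [Finset.sum_subtype (p := fun j => j ≠ i) _ (by simp) (fun j => (rs j).wt)]
      have e1 : (rs i).wt = κ.wt + rv.wt := by
        rw [← hw]
        exact (RunOf.wt_cast hup (congrArg (RunOf M · (qs i)) hup.symm).symm (rs i)).symm
      rw [e1]
      ring

lemma reach_node {a : A.symb} {ts : Fin (A.ar a) → Term A} {q : Q} :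
    q ∈ reachSet M (Term.node a ts) ↔
      ∃ qs, M.trans a qs q ∧ ∀ j, qs j ∈ reachSet M (ts j) := by
  constructor
  · rintro ⟨ρ⟩
    cases ρ with
    | node _ _ qs _ hq rs => exact ⟨qs, hq, fun j => ⟨rs j⟩⟩
  · rintro ⟨qs, hq, hr⟩
    exact ⟨RunOf.node a ts qs q hq (fun j => (hr j).some)⟩

lemma reach_plug_congr (c : Ctx A) {v w : Term A}
    (h : reachSet M v = reachSet M w) :
    reachSet M (c.plug v) = reachSet M (c.plug w) := by
  induction c with
  | hole => exact h
  | node a i c ts ih =>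
    ext q
    show q ∈ reachSet M (Term.node a _) ↔ q ∈ reachSet M (Term.node a _)
    rw [reach_node, reach_node]
    constructor <;> rintro ⟨qs, hq, hr⟩ <;> refine ⟨qs, hq, fun j => ?_⟩ <;>
      by_cases hj : j = i
    · subst hj
      have := hr j
      rw [Function.update_self] at this
      rw [Function.update_self]
      exact ih ▸ this
    · have := hr j
      rw [Function.update_of_ne hj] at this
      rwa [Function.update_of_ne hj]
    · subst hj
      have := hr j
      rw [Function.update_self] at this
      rw [Function.update_self]
      exact ih.symm ▸ this
    · have := hr j
      rw [Function.update_of_ne hj] at this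
      rwa [Function.update_of_ne hj]

lemma Term.size_pos (t : Term A) : 0 < t.size := by
  cases t with
  | node a ts => show 0 < 1 + _; positivity

lemma Term.size_le_plug (c : Ctx A) (v : Term A) : v.size ≤ (c.plug v).size := by
  induction c with
  | hole => exact le_refl _
  | node a i c ts ih =>
    show v.size ≤ 1 + ∑ j, (Function.update ts i (c.plug v) j).size
    calc v.size ≤ (c.plug v).size := ih
    _ ≤ ∑ j, (Function.update ts i (c.plug v) j).size := by
        refine Finset.single_le_sum (f := fun j => (Function.update ts i (c.plug v) j).size)
          (fun j _ => Nat.zero_le _) (Finset.mem_univ i) |>.trans_eq' ?_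
        rw [Function.update_self]
    _ ≤ 1 + _ := Nat.le_add_left _ _

lemma Term.size_plug_lt (c : Ctx A) {v w : Term A} (h : v.size < w.size) :
    (c.plug v).size < (c.plug w).size := by
  induction c with
  | hole => exact h
  | node a i c ts ih =>
    show 1 + _ < 1 + _
    have key : ∀ u : Term A, ∑ j, (Function.update ts i u j).size
        = u.size + ∑ j ∈ Finset.univ.erase i, (ts j).size := by
      intro u
      rw [← Finset.add_sum_erase _ _ (Finset.mem_univ i), Function.update_self]
      congr 1
      exact Finset.sum_congr rfl (fun j hj =>
        by rw [Function.update_of_ne (Finset.mem_erase.mp hj).1])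
    rw [key, key]
    omega

lemma Term.height_node_succ (a : A.symb) (ts : Fin (A.ar a) → Term A)
    (h : 0 < (Term.node a ts).height) : ∃ i, (ts i).height + 1 = (Term.node a ts).height := by
  have hne : (Finset.univ : Finset (Fin (A.ar a))).Nonempty := by
    by_contra hc
    rw [Finset.not_nonempty_iff_eq_empty] at hc
    have : (Term.node a ts).height = 0 := by
      show Finset.univ.sup _ = 0
      rw [hc]; rfl
    omega
  obtain ⟨i, _, hi⟩ := Finset.exists_mem_eq_sup Finset.univ hne
    (fun i => (ts i).height + 1)
  exact ⟨i, hi.symm⟩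

instance RunOf.finite : ∀ (t : Term A) (q : Q) [Fintype Q], Finite (RunOf M t q) := by
  intro t
  induction t with
  | node a ts ih =>
    intro q _
    have : ∀ i (qi : Q), Finite (RunOf M (ts i) qi) := fun i qi => ih i qi
    refine Finite.of_injective (fun r : RunOf M (Term.node a ts) q =>
      (match r with
        | .node _ _ qs _ _ rs => ⟨qs, rs⟩ :
          Σ qs : Fin (A.ar a) → Q, ∀ i, RunOf M (ts i) (qs i))) ?_
    rintro ⟨⟩ ⟨⟩ h
    simp only [Sigma.mk.inj_iff] at h
    obtain ⟨h1, h2⟩ := h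
    subst h1
    rw [heq_eq_eq] at h2
    subst h2
    rfl

lemma exists_chain (s : Term A) : ∃ (sub : ℕ → Term A) (step : ℕ → Ctx A),
    sub 0 = s ∧ (∀ l, sub l = (step l).plug (sub (l+1))) ∧
    (∀ l, l < s.height → (sub (l+1)).size < (sub l).size) := by
  induction s with
  | node a ts ih =>
    by_cases h : (Term.node a ts).height = 0
    · refine ⟨fun _ => Term.node a ts, fun _ => Ctx.hole, rfl, fun l => rfl, fun l hl => ?_⟩
      omega
    · obtain ⟨i, hi⟩ := Term.height_node_succ a ts (Nat.pos_of_ne_zero h)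
      obtain ⟨sub', step', h0, hstep, hsize⟩ := ih i
      refine ⟨fun l => match l with | 0 => Term.node a ts | (l+1) => sub' l,
              fun l => match l with | 0 => Ctx.node a i Ctx.hole ts | (l+1) => step' l,
              rfl, ?_, ?_⟩
      · intro l
        match l with
        | 0 =>
          show Term.node a ts = Term.node a (Function.update ts i (Ctx.hole.plug (sub' 0)))
          rw [h0]
          show Term.node a ts = Term.node a (Function.update ts i (ts i))
          rw [Function.update_eq_self]
        | (l+1) => exact hstep l
      · intro l hl
        match l with
        | 0 =>
          show (sub' 0).size < (Term.node a ts).size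
          rw [h0]
          show (ts i).size < 1 + ∑ j, (ts j).size
          have : (ts i).size ≤ ∑ j, (ts j).size :=
            Finset.single_le_sum (f := fun j => (ts j).size) (fun j _ => Nat.zero_le _)
              (Finset.mem_univ i)
          omega
        | (l+1) =>
          refine hsize l ?_
          omega

/-- Iterated composition of the step contexts, from level `i`, `k` steps. -/
def segFrom (step : ℕ → Ctx A) : ℕ → ℕ → Ctx A
  | _, 0 => Ctx.hole
  | i, (k+1) => (step i).comp (segFrom step (i+1) k)

lemma segFrom_plug (sub : ℕ → Term A) (step : ℕ → Ctx A)
    (hstep : ∀ l, sub l = (step l).plug (sub (l+1))) :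
    ∀ (k i : ℕ), (segFrom step i k).plug (sub (i+k)) = sub i := by
  intro k
  induction k with
  | zero => intro i; rfl
  | succ k ihk =>
    intro i
    show ((step i).comp (segFrom step (i+1) k)).plug (sub (i+(k+1))) = sub i
    rw [Ctx.plug_comp, show i+(k+1) = (i+1)+k from by omega, ihk (i+1), ← hstep i]

/-- Decomposition of a run along a chain of contexts. -/
noncomputable def rdec (sub : ℕ → Term A) (step : ℕ → Ctx A)
    (hstep : ∀ l, sub l = (step l).plug (sub (l+1)))
    {p : Q} (ρ0 : RunOf M (sub 0) p) : (l : ℕ) → Σ' q : Q, RunOf M (sub l) q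
  | 0 => ⟨p, ρ0⟩
  | (l+1) =>
    let prev := rdec sub step hstep ρ0 l
    let h := exists_decomp (M := M) (step l) (sub (l+1)) prev.1
      (cast (congrArg (fun u => RunOf M u prev.1) (hstep l)) prev.2)
    ⟨h.choose, h.choose_spec.choose_spec.choose⟩

lemma rdec_zero (sub : ℕ → Term A) (step : ℕ → Ctx A)
    (hstep : ∀ l, sub l = (step l).plug (sub (l+1)))
    {p : Q} (ρ0 : RunOf M (sub 0) p) : rdec sub step hstep ρ0 0 = ⟨p, ρ0⟩ := rfl

lemma rdec_spec (sub : ℕ → Term A) (step : ℕ → Ctx A)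
    (hstep : ∀ l, sub l = (step l).plug (sub (l+1)))
    {p : Q} (ρ0 : RunOf M (sub 0) p) (l : ℕ) :
    ∃ κ : CRun M (step l) ((rdec sub step hstep ρ0 (l+1)).1) ((rdec sub step hstep ρ0 l).1),
      ((rdec sub step hstep ρ0 l).2).wt
        = κ.wt + ((rdec sub step hstep ρ0 (l+1)).2).wt := by
  set prev := rdec sub step hstep ρ0 l with hprev
  have h := exists_decomp (M := M) (step l) (sub (l+1)) prev.1
      (cast (congrArg (fun u => RunOf M u prev.1) (hstep l)) prev.2)
  have hcur : rdec sub step hstep ρ0 (l+1)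
      = ⟨h.choose, h.choose_spec.choose_spec.choose⟩ := by
    rw [rdec]
  have hwt2 : ((rdec sub step hstep ρ0 (l+1)).2).wt
      = (h.choose_spec.choose_spec.choose).wt := congrArg (fun x => x.2.wt) hcur
  have hfst : (rdec sub step hstep ρ0 (l+1)).1 = h.choose := congrArg (fun x => x.1) hcur
  obtain ⟨κ0, hκ0eq⟩ : ∃ κ : CRun M (step l) ((rdec sub step hstep ρ0 (l+1)).1) prev.1,
      κ.wt = (h.choose_spec.choose).wt := by
    rw [hfst]
    exact ⟨h.choose_spec.choose, rfl⟩
  refine ⟨κ0, ?_⟩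
  have hmain := h.choose_spec.choose_spec.choose_spec
  have hc : (cast (congrArg (fun u => RunOf M u prev.1) (hstep l)) prev.2).wt = prev.2.wt :=
    RunOf.wt_cast (hstep l) _ _
  linarith [hmain, hc, hκ0eq, hwt2]

lemma rdec_seg (sub : ℕ → Term A) (step : ℕ → Ctx A)
    (hstep : ∀ l, sub l = (step l).plug (sub (l+1)))
    {p : Q} (ρ0 : RunOf M (sub 0) p) :
    ∀ (k i j : ℕ), i + k = j → ∃ κ : CRun M (segFrom step i k)
        ((rdec sub step hstep ρ0 j).1) ((rdec sub step hstep ρ0 i).1),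
      κ.wt = ((rdec sub step hstep ρ0 i).2).wt - ((rdec sub step hstep ρ0 j).2).wt := by
  intro k
  induction k with
  | zero =>
    intro i j h
    obtain rfl : i = j := by omega
    exact ⟨CRun.hole _, by simp [CRun.wt]⟩
  | succ k ihk =>
    intro i j h
    obtain ⟨κ', hκ'⟩ := ihk (i+1) j (by omega)
    obtain ⟨κi, hκi⟩ := rdec_spec sub step hstep ρ0 i
    refine ⟨κi.cglue κ', ?_⟩
    have hw := CRun.wt_cglue κi κ'
    rw [hκ'] at hw
    exact hw.trans (by rw [hκi]; ring)

lemma CRun.exists_congr_left {c : Ctx A} {p p' q : Q} (h : p = p') (κ : CRun M c p q) :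
    ∃ κ' : CRun M c p' q, κ'.wt = κ.wt := by subst h; exact ⟨κ, rfl⟩

lemma RunOf.exists_congr {t : Term A} {q q' : Q} (h : q = q') (r : RunOf M t q) :
    ∃ r' : RunOf M t q', r'.wt = r.wt := by subst h; exact ⟨r, rfl⟩

end Basics

section Helpers
variable {A : RankedAlphabet} {Q : Type} {M : WTA A Q}

lemma rdec_zero_fst (sub : ℕ → Term A) (step : ℕ → Ctx A)
    (hstep : ∀ l, sub l = (step l).plug (sub (l+1)))
    {p : Q} (ρ0 : RunOf M (sub 0) p) : (rdec sub step hstep ρ0 0).1 = p := rfl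

lemma rdec_zero_wt (sub : ℕ → Term A) (step : ℕ → Ctx A)
    (hstep : ∀ l, sub l = (step l).plug (sub (l+1)))
    {p : Q} (ρ0 : RunOf M (sub 0) p) : ((rdec sub step hstep ρ0 0).2).wt = ρ0.wt := rfl

lemma chain_size (sub : ℕ → Term A) (N : ℕ)
    (hsize : ∀ l, l < N → (sub (l+1)).size < (sub l).size) :
    ∀ i j, i < j → j ≤ N → (sub j).size < (sub i).size := by
  intro i j hij hjN
  induction j with
  | zero => omega
  | succ j ihj =>
    rcases Nat.lt_or_ge i j with h | h
    · exact (hsize j (by omega)).trans (ihj h (by omega))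
    · have : i = j := by omega
      subst this
      exact hsize i (by omega)

lemma le_slope {α β δ ε : ℝ} (h : ∀ n : ℕ, α + n*δ ≤ β + n*ε) : δ ≤ ε := by
  by_contra hlt
  push_neg at hlt
  obtain ⟨n, hn⟩ := exists_nat_gt ((β - α)/(δ - ε))
  rw [div_lt_iff₀ (by linarith)] at hn
  have := h n
  nlinarith

end Helpers

section Helpers2
variable {A : RankedAlphabet} {Q1 Q2 : Type}

lemma biReach_eq_iff {M1 : WTA A Q1} {M2 : WTA A Q2} {u w : Term A} :
    biReach M1 M2 u = biReach M1 M2 w ↔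
      (reachSet M1 u = reachSet M1 w ∧ reachSet M2 u = reachSet M2 w) := by
  constructor
  · intro h
    constructor
    · ext p
      have h1 : Sum.inl p ∈ biReach M1 M2 u ↔ Sum.inl p ∈ biReach M1 M2 w := by rw [h]
      simpa [biReach] using h1
    · ext q
      have h1 : Sum.inr q ∈ biReach M1 M2 u ↔ Sum.inr q ∈ biReach M1 M2 w := by rw [h]
      simpa [biReach] using h1
  · rintro ⟨h1, h2⟩
    unfold biReach
    rw [h1, h2]

lemma refines_refl (M1 : WTA A Q1) (M2 : WTA A Q2) (P : Set (Q1 ⊕ Q2)) (s : Term A) :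
    Refines M1 M2 P s s 0 :=
  ⟨rfl, fun _ _ ρ => ⟨ρ, by simp⟩, fun _ _ τ => ⟨τ, by simp⟩⟩

lemma refines_trans {M1 : WTA A Q1} {M2 : WTA A Q2} {P : Set (Q1 ⊕ Q2)} {t u s : Term A}
    {x y : ℝ} (h1 : Refines M1 M2 P t u x) (h2 : Refines M1 M2 P u s y) :
    Refines M1 M2 P t s (x + y) := by
  obtain ⟨hr1, hmax1, hmin1⟩ := h1
  obtain ⟨hr2, hmax2, hmin2⟩ := h2
  refine ⟨hr2.trans hr1, fun p hp ρ => ?_, fun q hq τ => ?_⟩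
  · obtain ⟨ρ', hρ'⟩ := hmax2 p hp ρ
    obtain ⟨ρ'', hρ''⟩ := hmax1 p hp ρ'
    exact ⟨ρ'', by linarith⟩
  · obtain ⟨τ', hτ'⟩ := hmin2 q hq τ
    obtain ⟨τ'', hτ''⟩ := hmin1 q hq τ'
    exact ⟨τ'', by linarith⟩

lemma acc_le {Mmax : WTA A Q1} {Mmin : WTA A Q2} {f g : Term A → Option ℝ}
    (hf : ComputesMax Mmax f) (hg : ComputesMin Mmin g)
    (hle : ∀ t, OLe (f t) (g t)) (X : Term A) {x y : ℝ}
    (hx : AccWeight Mmax X x) (hy : AccWeight Mmin X y) : x ≤ y := by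
  have hfX : ∃ xf, f X = some xf := by
    rcases h : f X with _ | xf
    · exact absurd (⟨x, hx⟩ : HasAcc Mmax X) (((hf X).1).mp h)
    · exact ⟨xf, rfl⟩
  have hgX : ∃ xg, g X = some xg := by
    rcases h : g X with _ | xg
    · exact absurd (⟨y, hy⟩ : HasAcc Mmin X) (((hg X).1).mp h)
    · exact ⟨xg, rfl⟩
  obtain ⟨xf, hxf⟩ := hfX
  obtain ⟨xg, hxg⟩ := hgX
  have h1 : x ≤ xf := ((hf X).2 xf hxf).2 x hx
  have h2 : xg ≤ y := ((hg X).2 xg hxg).2 y hy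
  have h3 : OLe (f X) (g X) := hle X
  rw [hxf, hxg] at h3
  exact le_trans h1 (le_trans h3 h2)

end Helpers2
section Cut
open scoped Classical

variable {A : RankedAlphabet} {Q1 Q2 : Type} [Fintype Q1] [Fintype Q2]
  {Mmax : WTA A Q1} {Mmin : WTA A Q2} {f g : Term A → Option ℝ}

/-- The bound on heights: number of possible annotations along a branch. -/
noncomputable def annBound (Q1 Q2 : Type) [Fintype Q1] [Fintype Q2] : ℕ :=
  Nat.card (Set (Q1 ⊕ Q2) × (Q1 → Q1) × (Q2 → Q2))

lemma cut_lemma (hf : ComputesMax Mmax f) (hg : ComputesMin Mmin g)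
    (hle : ∀ t, OLe (f t) (g t)) (d : Ctx A) (s : Term A)
    (hh : annBound Q1 Q2 < s.height) :
    ∃ (t : Term A) (x : ℝ), t.size < s.size ∧
      Refines Mmax Mmin (biProd Mmax Mmin d) t s x := by
  obtain ⟨sub, step, hsub0, hstep, hsize⟩ := exists_chain s
  set P := biProd Mmax Mmin d with hP
  -- index types of relevant states
  let PL := {p : Q1 // Sum.inl p ∈ P ∧ Nonempty (RunOf Mmax s p)}
  let QR := {q : Q2 // Sum.inr q ∈ P ∧ Nonempty (RunOf Mmin s q)}
  -- maximal runs of Mmax on s, minimal runs of Mmin on s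
  have hmaxrun : ∀ p : PL, ∃ ρs : RunOf Mmax s p.1, ∀ ρ : RunOf Mmax s p.1, ρ.wt ≤ ρs.wt :=
    fun p => by haveI := p.2.2; exact Finite.exists_max RunOf.wt
  have hminrun : ∀ q : QR, ∃ τs : RunOf Mmin s q.1, ∀ τ : RunOf Mmin s q.1, τs.wt ≤ τ.wt :=
    fun q => by haveI := q.2.2; exact Finite.exists_min RunOf.wt
  choose ρstar hρstar using hmaxrun
  choose τstar hτstar using hminrun
  -- transport to level 0 of the chain
  have hρ0 : ∀ p : PL, (cast (congrArg (fun u => RunOf Mmax u p.1) hsub0.symm) (ρstar p)).wt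
      = (ρstar p).wt := fun p => RunOf.wt_cast hsub0.symm _ _
  have hτ0 : ∀ q : QR, (cast (congrArg (fun u => RunOf Mmin u q.1) hsub0.symm) (τstar q)).wt
      = (τstar q).wt := fun q => RunOf.wt_cast hsub0.symm _ _
  set ρ0 : ∀ p : PL, RunOf Mmax (sub 0) p.1 :=
    fun p => cast (congrArg (fun u => RunOf Mmax u p.1) hsub0.symm) (ρstar p) with hρ0def
  set τ0 : ∀ q : QR, RunOf Mmin (sub 0) q.1 :=
    fun q => cast (congrArg (fun u => RunOf Mmin u q.1) hsub0.symm) (τstar q) with hτ0def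
  -- the annotation of levels
  set ann : ℕ → Set (Q1 ⊕ Q2) × (Q1 → Q1) × (Q2 → Q2) := fun l =>
    (biReach Mmax Mmin (sub l),
     fun p' => if h : Sum.inl p' ∈ P ∧ Nonempty (RunOf Mmax s p')
       then (rdec sub step hstep (ρ0 ⟨p', h⟩) l).1 else p',
     fun q' => if h : Sum.inr q' ∈ P ∧ Nonempty (RunOf Mmin s q')
       then (rdec sub step hstep (τ0 ⟨q', h⟩) l).1 else q') with hann
  -- pigeonhole
  obtain ⟨i, j, hij, hjh, hanneq⟩ :
      ∃ i j, i < j ∧ j ≤ s.height ∧ ann i = ann j := by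
    haveI : Fintype (Set (Q1 ⊕ Q2) × (Q1 → Q1) × (Q2 → Q2)) := Fintype.ofFinite _
    have hcard : Fintype.card (Set (Q1 ⊕ Q2) × (Q1 → Q1) × (Q2 → Q2))
        < Fintype.card (Fin (annBound Q1 Q2 + 1)) := by
      have h1 : Nat.card (Set (Q1 ⊕ Q2) × (Q1 → Q1) × (Q2 → Q2))
          = Fintype.card (Set (Q1 ⊕ Q2) × (Q1 → Q1) × (Q2 → Q2)) := Nat.card_eq_fintype_card
      rw [Fintype.card_fin]
      show _ < Nat.card (Set (Q1 ⊕ Q2) × (Q1 → Q1) × (Q2 → Q2)) + 1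
      omega
    obtain ⟨a, b, hne, heq⟩ := Fintype.exists_ne_map_eq_of_card_lt
      (fun m : Fin (annBound Q1 Q2 + 1) => ann m.val) hcard
    have hvne : a.val ≠ b.val := fun h => hne (Fin.ext h)
    rcases hvne.lt_or_gt with h | h
    · exact ⟨a.val, b.val, h, by omega, heq⟩
    · exact ⟨b.val, a.val, h, by omega, heq.symm⟩
  -- contexts
  set C := segFrom step 0 i with hC
  set gctx := segFrom step i (j - i) with hg2
  have hsC : C.plug (sub i) = s := by
    have := segFrom_plug sub step hstep i 0
    rw [Nat.zero_add] at this
    rw [hC, this, hsub0]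
  have hsg : gctx.plug (sub j) = sub i := by
    have := segFrom_plug sub step hstep (j - i) i
    rwa [show i + (j - i) = j from by omega] at this
  -- annotation components
  have hreach : biReach Mmax Mmin (sub i) = biReach Mmax Mmin (sub j) :=
    congrArg Prod.fst hanneq
  have hstP : ∀ p : PL, (rdec sub step hstep (ρ0 p) i).1 = (rdec sub step hstep (ρ0 p) j).1 := by
    intro p
    have h1 := congrFun (congrArg (fun z => z.2.1) hanneq) p.1
    simpa only [hann, dif_pos p.2] using h1
  have hstQ : ∀ q : QR, (rdec sub step hstep (τ0 q) i).1 = (rdec sub step hstep (τ0 q) j).1 := by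
    intro q
    have h1 := congrFun (congrArg (fun z => z.2.2) hanneq) q.1
    simpa only [hann, dif_pos q.2] using h1
  -- key decomposition for the max side
  have key_max : ∀ p : PL, ∃ (σ : Q1) (κC : CRun Mmax C σ p.1) (κg : CRun Mmax gctx σ σ)
      (rv : RunOf Mmax (sub j) σ), (ρstar p).wt = κC.wt + κg.wt + rv.wt := by
    intro p
    obtain ⟨κC, hκC⟩ := rdec_seg sub step hstep (ρ0 p) i 0 i (by omega)
    obtain ⟨κg0, hκg0⟩ := rdec_seg sub step hstep (ρ0 p) (j - i) i j (by omega)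
    obtain ⟨κg, hκg⟩ := CRun.exists_congr_left (hstP p).symm κg0
    obtain ⟨rv, hrv⟩ := RunOf.exists_congr (hstP p).symm (rdec sub step hstep (ρ0 p) j).2
    refine ⟨(rdec sub step hstep (ρ0 p) i).1, κC, κg, rv, ?_⟩
    have e0 : ((rdec sub step hstep (ρ0 p) 0).2).wt = (ρstar p).wt := hρ0 p
    show (ρstar p).wt = κC.wt + κg.wt + rv.wt
    linarith [hκC, hκg0, hκg, hrv, e0]
  have key_min : ∀ q : QR, ∃ (θ : Q2) (κC : CRun Mmin C θ q.1) (κg : CRun Mmin gctx θ θ)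
      (rv : RunOf Mmin (sub j) θ), (τstar q).wt = κC.wt + κg.wt + rv.wt := by
    intro q
    obtain ⟨κC, hκC⟩ := rdec_seg sub step hstep (τ0 q) i 0 i (by omega)
    obtain ⟨κg0, hκg0⟩ := rdec_seg sub step hstep (τ0 q) (j - i) i j (by omega)
    obtain ⟨κg, hκg⟩ := CRun.exists_congr_left (hstQ q).symm κg0
    obtain ⟨rv, hrv⟩ := RunOf.exists_congr (hstQ q).symm (rdec sub step hstep (τ0 q) j).2
    refine ⟨(rdec sub step hstep (τ0 q) i).1, κC, κg, rv, ?_⟩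
    have e0 : ((rdec sub step hstep (τ0 q) 0).2).wt = (τstar q).wt := hτ0 q
    show (τstar q).wt = κC.wt + κg.wt + rv.wt
    linarith [hκC, hκg0, hκg, hrv, e0]
  choose σP κCP κgP rvP hwP using key_max
  choose θQ κCQ κgQ rvQ hwQ using key_min
  -- the pumping argument: every max-loop weight is at most every min-loop weight
  have hpump : ∀ (p : PL) (q : QR), (κgP p).wt ≤ (κgQ q).wt := by
    intro p q
    obtain ⟨φ, hφ, ⟨κd⟩⟩ : ∃ φ, Mmax.final φ ∧ Nonempty (CRun Mmax d p.1 φ) := by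
      have h2 : Sum.inl p.1 ∈ biProd Mmax Mmin d := p.2.1
      rcases h2 with h | h
      · obtain ⟨p', hp', hpe⟩ := h
        obtain rfl : p' = p.1 := Sum.inl.inj hpe
        exact hp'
      · obtain ⟨q', _, hpe⟩ := h
        exact absurd hpe (by simp)
    obtain ⟨φ', hφ', ⟨κd'⟩⟩ : ∃ φ', Mmin.final φ' ∧ Nonempty (CRun Mmin d q.1 φ') := by
      have h2 : Sum.inr q.1 ∈ biProd Mmax Mmin d := q.2.1
      rcases h2 with h | h
      · obtain ⟨p', _, hpe⟩ := h
        exact absurd hpe (by simp)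
      · obtain ⟨q', hq', hpe⟩ := h
        obtain rfl : q' = q.1 := Sum.inr.inj hpe
        exact hq'
    refine le_slope (α := κd.wt + ((κCP p).wt + (rvP p).wt) + Mmax.fwt φ)
      (β := κd'.wt + ((κCQ q).wt + (rvQ q).wt) + Mmin.fwt φ') ?_
    intro n
    set Xn := d.plug (C.plug ((gctx.pow n).plug (sub j))) with hXn
    have hacc1 : AccWeight Mmax Xn
        (κd.wt + ((κCP p).wt + (rvP p).wt) + Mmax.fwt φ + n * (κgP p).wt) := by
      refine ⟨φ, κd.glue ((κCP p).glue (((κgP p).pow n).glue (rvP p))), hφ, ?_⟩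
      rw [CRun.wt_glue, CRun.wt_glue, CRun.wt_glue, CRun.wt_pow]
      ring
    have hacc2 : AccWeight Mmin Xn
        (κd'.wt + ((κCQ q).wt + (rvQ q).wt) + Mmin.fwt φ' + n * (κgQ q).wt) := by
      refine ⟨φ', κd'.glue ((κCQ q).glue (((κgQ q).pow n).glue (rvQ q))), hφ', ?_⟩
      rw [CRun.wt_glue, CRun.wt_glue, CRun.wt_glue, CRun.wt_pow]
      ring
    have := acc_le hf hg hle Xn hacc1 hacc2
    linarith
  -- choice of the shift
  have hx : ∃ x : ℝ, (∀ p : PL, (κgP p).wt ≤ x) ∧ (∀ q : QR, x ≤ (κgQ q).wt) := by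
    by_cases hPL : Nonempty PL
    · obtain ⟨pm, hpm⟩ := Finite.exists_max (fun p : PL => (κgP p).wt)
      exact ⟨(κgP pm).wt, hpm, fun q => hpump pm q⟩
    · by_cases hQR : Nonempty QR
      · obtain ⟨qm, hqm⟩ := Finite.exists_min (fun q : QR => (κgQ q).wt)
        exact ⟨(κgQ qm).wt, fun p => absurd ⟨p⟩ hPL, hqm⟩
      · exact ⟨0, fun p => absurd ⟨p⟩ hPL, fun q => absurd ⟨q⟩ hQR⟩
  obtain ⟨x, hx1, hx2⟩ := hx
  -- the cut term
  refine ⟨C.plug (sub j), x, ?_, ?_, ?_, ?_⟩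
  · -- size decreases
    rw [← hsC]
    exact Term.size_plug_lt C (chain_size sub s.height hsize i j hij hjh)
  · -- reach equality
    rw [biReach_eq_iff] at hreach ⊢
    obtain ⟨h1, h2⟩ := hreach
    constructor
    · rw [← hsC]
      exact reach_plug_congr C h1
    · rw [← hsC]
      exact reach_plug_congr C h2
  · -- max side
    intro p' hp' ρ
    let pp : PL := ⟨p', hp', ⟨ρ⟩⟩
    refine ⟨(κCP pp).glue (rvP pp), ?_⟩
    rw [CRun.wt_glue]
    have h1 := hρstar pp ρ
    have h2 := hwP pp
    have h3 := hx1 pp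
    linarith
  · -- min side
    intro q' hq' τ
    let qq : QR := ⟨q', hq', ⟨τ⟩⟩
    refine ⟨(κCQ qq).glue (rvQ qq), ?_⟩
    rw [CRun.wt_glue]
    have h1 := hτstar qq τ
    have h2 := hwQ qq
    have h3 := hx2 qq
    linarith
end Cut
/-- bounded-height refinement corollary: assuming `⟦A_max⟧ ≤ ⟦A_min⟧`,
there is a `k ∈ ℕ` such that for every productive-set `P` and every term `s`, some term
`t` of height at most `k` refines `s` for `P` with some shift `x`. -/
theorem bounded_height_refinement {A : RankedAlphabet} {Q1 Q2 : Type}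
    [Fintype Q1] [Fintype Q2] (Mmax : WTA A Q1) (Mmin : WTA A Q2)
    (f g : Term A → Option ℝ)
    (hf : ComputesMax Mmax f) (hg : ComputesMin Mmin g)
    (hle : ∀ t, OLe (f t) (g t)) :
    ∃ k : ℕ, ∀ P ∈ ProductiveSets Mmax Mmin, ∀ s : Term A,
      ∃ (t : Term A) (x : ℝ), t.height ≤ k ∧ Refines Mmax Mmin P t s x := by
  refine ⟨annBound Q1 Q2, ?_⟩
  rintro P ⟨d, rfl⟩ s
  have main : ∀ N (s : Term A), s.size ≤ N → ∃ (t : Term A) (x : ℝ),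
      t.height ≤ annBound Q1 Q2 ∧ Refines Mmax Mmin (biProd Mmax Mmin d) t s x := by
    intro N
    induction N with
    | zero =>
      intro s hs
      have := Term.size_pos s
      omega
    | succ N ih =>
      intro s hs
      by_cases hh : s.height ≤ annBound Q1 Q2
      · exact ⟨s, 0, hh, refines_refl _ _ _ s⟩
      · push_neg at hh
        obtain ⟨t', x', hlt, href⟩ := cut_lemma hf hg hle d s hh
        obtain ⟨t, x'', ht, href2⟩ := ih t' (by omega)
        exact ⟨t, x'' + x', ht, refines_trans href2 href⟩
  exact main s.size s le_rfl
end

section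
/- For the product automaton A_pro: for every P ∈ Productive and every term t, there is exactly one run of A_pro over t whose root state has second component P, and its root state is (Reach(t), P). Dually, for every R ∈ Reachable and every context c, there is exactly one accepting run of A_pro over c whose hole state has first component R, and its hole state is (R, Prod(c)). -/
/-- Reachable-sets of a single automaton. -/
def ReachableS {A : RankedAlphabet} {Q : Type} (M : WTA A Q) : Set (Set Q) :=
  {S | ∃ t, reachSet M t = S}

/-- Productive-sets of a single automaton. -/
def ProductiveS {A : RankedAlphabet} {Q : Type} (M : WTA A Q) : Set (Set Q) :=
  {S | ∃ c, prodSet M c = S}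

/-- The product automaton `A_pro`, computing reachable sets bottom-up and productive
sets top-down; its states are pairs `(R, P)` with `R ∈ Reachable` and `P ∈ Productive`,
its final states are those with `P = F`. (It carries trivial weights.) -/
def Apro {A : RankedAlphabet} {Q : Type} (M : WTA A Q) : WTA A (Set Q × Set Q) where
  trans a sts out :=
    ProTrans M.trans a sts out ∧
    (out.1 ∈ ReachableS M ∧ out.2 ∈ ProductiveS M) ∧
    ∀ i, (sts i).1 ∈ ReachableS M ∧ (sts i).2 ∈ ProductiveS M
  wt _ _ _ := 0
  final S := S.2 = {q | M.final q} ∧ S.1 ∈ ReachableS M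
  fwt _ := 0


section Aux
variable {A : RankedAlphabet} {Q : Type} (M : WTA A Q)

/-- The set formula for first components in `ProTrans`. -/
def F1 (a : A.symb) (Rs : Fin (A.ar a) → Set Q) : Set Q :=
  {r | ∃ rs, M.trans a rs r ∧ ∀ j, rs j ∈ Rs j}

/-- The set formula for second components in `ProTrans`. -/
def F2 (a : A.symb) (i : Fin (A.ar a)) (Rs : Fin (A.ar a) → Set Q) (P : Set Q) : Set Q :=
  {ri | ∃ rs p, M.trans a rs p ∧ rs i = ri ∧ (∀ j, j ≠ i → rs j ∈ Rs j) ∧ p ∈ P}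

lemma protrans_iff (a : A.symb) (qs : Fin (A.ar a) → Set Q × Set Q) (S : Set Q × Set Q) :
    ProTrans M.trans a qs S ↔
      S.1 = F1 M a (fun j => (qs j).1) ∧ ∀ i, (qs i).2 = F2 M a i (fun j => (qs j).1) S.2 :=
  Iff.rfl

lemma F2_congr {a : A.symb} {i : Fin (A.ar a)} {Rs Rs' : Fin (A.ar a) → Set Q} {P P' : Set Q}
    (h : ∀ j, j ≠ i → Rs j = Rs' j) (hP : P = P') : F2 M a i Rs P = F2 M a i Rs' P' := by
  subst hP
  ext x
  constructor <;> rintro ⟨rs, p, h1, h2, h3, h4⟩ <;>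
    exact ⟨rs, p, h1, h2, fun j hj => by
      first
        | (rw [← h j hj]; exact h3 j hj)
        | (rw [h j hj]; exact h3 j hj), h4⟩

lemma reachSet_node (a : A.symb) (ts : Fin (A.ar a) → Term A) :
    reachSet M (.node a ts) = F1 M a (fun j => reachSet M (ts j)) := by
  ext q
  constructor
  · rintro ⟨r⟩
    cases r with
    | node a ts qs q hq rs => exact ⟨qs, hq, fun j => ⟨rs j⟩⟩
  · rintro ⟨rs, hq, h⟩
    exact ⟨.node a ts rs q hq fun j => (h j).some⟩

/-- Hole-states from which a run over `c` into `P` exists. -/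
def prodC (c : Ctx A) (P : Set Q) : Set Q :=
  {p | ∃ q ∈ P, Nonempty (CRun M c p q)}

/-- Root-states reachable over `c` from hole-states in `R`. -/
def reachC (c : Ctx A) (R : Set Q) : Set Q :=
  {q | ∃ p ∈ R, Nonempty (CRun M c p q)}

lemma prodC_hole (P : Set Q) : prodC M .hole P = P := by
  ext p
  constructor
  · rintro ⟨q, hq, ⟨r⟩⟩
    cases r
    exact hq
  · intro hp
    exact ⟨p, hp, ⟨.hole p⟩⟩

lemma reachC_hole (R : Set Q) : reachC M .hole R = R := by
  ext q
  constructor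
  · rintro ⟨p, hp, ⟨r⟩⟩
    cases r
    exact hp
  · intro hq
    exact ⟨q, hq, ⟨.hole q⟩⟩

lemma prodC_node (a : A.symb) (i : Fin (A.ar a)) (c : Ctx A) (ts : Fin (A.ar a) → Term A)
    (P : Set Q) :
    prodC M (.node a i c ts) P = prodC M c (F2 M a i (fun j => reachSet M (ts j)) P) := by
  ext p
  constructor
  · rintro ⟨q, hq, ⟨r⟩⟩
    cases r with
    | node a i c ts qs p q hq' hc rs =>
      exact ⟨qs i, ⟨qs, q, hq', rfl, fun j hj => ⟨rs j hj⟩, hq⟩, ⟨hc⟩⟩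
  · rintro ⟨m, ⟨rs, q, h1, h2, h3, h4⟩, ⟨hc⟩⟩
    exact ⟨q, h4, ⟨.node a i c ts rs p q h1 (h2 ▸ hc) (fun j hj => (h3 j hj).some)⟩⟩

lemma prodC_comp (c d : Ctx A) (P : Set Q) :
    prodC M (c.comp d) P = prodC M d (prodC M c P) := by
  induction c generalizing P with
  | hole => rw [Ctx.comp, prodC_hole]
  | node a i c ts ih => rw [Ctx.comp, prodC_node, ih, ← prodC_node]

lemma prodSet_eq (c : Ctx A) : prodSet M c = prodC M c {q | M.final q} := rfl

lemma prodSet_hole : prodSet M .hole = {q | M.final q} := by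
  rw [prodSet_eq, prodC_hole]

lemma F1_eq_reachC {a : A.symb} {i : Fin (A.ar a)} {c : Ctx A} {ts : Fin (A.ar a) → Term A}
    {Rs : Fin (A.ar a) → Set Q} {R : Set Q}
    (hi : Rs i = reachC M c R) (hj : ∀ j, j ≠ i → Rs j = reachSet M (ts j)) :
    F1 M a Rs = reachC M (.node a i c ts) R := by
  ext q
  constructor
  · rintro ⟨rs, hq, h⟩
    obtain ⟨p, hp, ⟨hc⟩⟩ : rs i ∈ reachC M c R := hi ▸ h i
    refine ⟨p, hp, ⟨.node a i c ts rs p q hq hc fun j hjne => ?_⟩⟩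
    have := h j
    rw [hj j hjne] at this
    exact this.some
  · rintro ⟨p, hp, ⟨r⟩⟩
    cases r with
    | node a i c ts qs p q hq' hc rs =>
      refine ⟨qs, hq', fun j => ?_⟩
      by_cases hji : j = i
      · subst hji
        rw [hi]
        exact ⟨p, hp, ⟨hc⟩⟩
      · rw [hj j hji]
        exact ⟨rs j hji⟩

lemma comp_hole (c : Ctx A) : c.comp .hole = c := by
  induction c with
  | hole => rfl
  | node a i c ts ih => rw [Ctx.comp, ih]

lemma comp_assoc (c d e : Ctx A) : (c.comp d).comp e = c.comp (d.comp e) := by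
  induction c with
  | hole => rfl
  | node a i c ts ih => rw [Ctx.comp, Ctx.comp, Ctx.comp, ih]

/-- Determination lemma for term runs of `Apro`. -/
lemma lemA : ∀ (t : Term A) (S : Set Q × Set Q) (r : RunOf (Apro M) t S),
    S.1 = reachSet M t ∧
    ∀ (S' : Set Q × Set Q) (r' : RunOf (Apro M) t S'), S.2 = S'.2 → S = S' ∧ HEq r r' := by
  intro t
  induction t with
  | node a ts ih =>
    intro S r
    obtain ⟨a, ts, qs, S, hq, rs⟩ := r
    have pro := (protrans_iff M a qs S).mp hq.1
    have hfst : ∀ j, (qs j).1 = reachSet M (ts j) := fun j => (ih j _ (rs j)).1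
    have hS1 : S.1 = reachSet M (.node a ts) := by
      rw [pro.1, reachSet_node]
      exact congrArg (F1 M a) (funext hfst)
    refine ⟨hS1, ?_⟩
    intro S' r' h2
    obtain ⟨a, ts, qs', S', hq', rs'⟩ := r'
    have pro' := (protrans_iff M a qs' S').mp hq'.1
    have hfst' : ∀ j, (qs' j).1 = reachSet M (ts j) := fun j => (ih j _ (rs' j)).1
    have hqs : qs = qs' := by
      funext j
      have h1 : (qs j).1 = (qs' j).1 := (hfst j).trans (hfst' j).symm
      have hsnd : (qs j).2 = (qs' j).2 := by
        rw [pro.2 j, pro'.2 j, h2]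
        exact F2_congr M (fun k _ => (hfst k).trans (hfst' k).symm) rfl
      exact Prod.ext h1 hsnd
    subst hqs
    have hrs : rs = rs' := by
      funext j
      exact eq_of_heq ((ih j _ (rs j)).2 _ (rs' j) rfl).2
    subst hrs
    have hSS : S = S' := by
      refine Prod.ext ?_ h2
      rw [pro.1, pro'.1]
    subst hSS
    exact ⟨rfl, heq_of_eq rfl⟩

/-- Existence lemma for term runs of `Apro`. -/
lemma lemB (t : Term A) : ∀ c : Ctx A, Nonempty (RunOf (Apro M) t (reachSet M t, prodSet M c)) := by
  induction t with
  | node a ts ih =>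
    intro c
    set qs : Fin (A.ar a) → Set Q × Set Q :=
      fun i => (reachSet M (ts i), prodSet M (c.comp (.node a i .hole ts))) with hqs
    have hsnd : ∀ i, (qs i).2 = F2 M a i (fun j => reachSet M (ts j)) (prodSet M c) := by
      intro i
      show prodSet M (c.comp (.node a i .hole ts)) = _
      rw [prodSet_eq, prodC_comp, prodC_node, prodC_hole, ← prodSet_eq]
    have htr : (Apro M).trans a qs (reachSet M (.node a ts), prodSet M c) := by
      refine ⟨⟨reachSet_node M a ts, hsnd⟩, ⟨⟨.node a ts, rfl⟩, ⟨c, rfl⟩⟩, fun i => ?_⟩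
      exact ⟨⟨ts i, rfl⟩, ⟨c.comp (.node a i .hole ts), rfl⟩⟩
    exact ⟨.node a ts qs _ htr fun i => (ih i (c.comp (.node a i .hole ts))).some⟩

/-- Determination lemma for context runs of `Apro`. -/
lemma lemC : ∀ (c : Ctx A) (S T : Set Q × Set Q) (r : CRun (Apro M) c S T),
    T.1 = reachC M c S.1 ∧ S.2 = prodC M c T.2 ∧
    ∀ (S' T' : Set Q × Set Q) (r' : CRun (Apro M) c S' T'),
      S.1 = S'.1 → T.2 = T'.2 → S = S' ∧ T = T' ∧ HEq r r' := by
  intro c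
  induction c with
  | hole =>
    intro S T r
    obtain ⟨S⟩ := r
    refine ⟨(reachC_hole M S.1).symm, (prodC_hole M S.2).symm, ?_⟩
    intro S' T' r' h1 h2
    obtain ⟨S'⟩ := r'
    have : S = S' := Prod.ext h1 h2
    subst this
    exact ⟨rfl, rfl, heq_of_eq rfl⟩
  | node a i c ts ih =>
    intro S T r
    cases r with
    | node _ _ _ _ qs S T hq hc rs =>
    have pro := (protrans_iff M a qs T).mp hq.1
    obtain ⟨hci, hcp, _⟩ := ih S (qs i) hc
    have hfst : ∀ j, j ≠ i → (qs j).1 = reachSet M (ts j) :=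
      fun j hj => (lemA M (ts j) (qs j) (rs j hj)).1
    have hT1 : T.1 = reachC M (.node a i c ts) S.1 := by
      rw [pro.1]
      exact F1_eq_reachC M hci hfst
    have hS2 : S.2 = prodC M (.node a i c ts) T.2 := by
      rw [hcp, pro.2 i, prodC_node]
      exact congrArg (prodC M c) (F2_congr M hfst rfl)
    refine ⟨hT1, hS2, ?_⟩
    intro S' T' r' h1 h2
    cases r' with
    | node _ _ _ _ qs' S' T' hq' hc' rs' =>
    have pro' := (protrans_iff M a qs' T').mp hq'.1
    obtain ⟨hci', hcp', _⟩ := ih S' (qs' i) hc'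
    have hfst' : ∀ j, j ≠ i → (qs' j).1 = reachSet M (ts j) :=
      fun j hj => (lemA M (ts j) (qs' j) (rs' j hj)).1
    have hall : ∀ j, (qs j).1 = (qs' j).1 := by
      intro j
      by_cases hj : j = i
      · subst hj
        rw [hci, hci', h1]
      · rw [hfst j hj, hfst' j hj]
    have hqs : qs = qs' := by
      funext j
      refine Prod.ext (hall j) ?_
      rw [pro.2 j, pro'.2 j]
      exact F2_congr M (fun k _ => hall k) h2
    subst hqs
    obtain ⟨hSS, -, hhc⟩ := (ih S (qs i) hc).2.2 S' (qs i) hc' h1 rfl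
    subst hSS
    have hhc' : hc = hc' := eq_of_heq hhc
    subst hhc'
    have hrs : rs = rs' := by
      funext j hj
      exact eq_of_heq ((lemA M (ts j) (qs j) (rs j hj)).2 _ (rs' j hj) rfl).2
    subst hrs
    have hTT : T = T' := by
      refine Prod.ext ?_ h2
      rw [pro.1, pro'.1]
    subst hTT
    exact ⟨rfl, rfl, heq_of_eq rfl⟩

/-- Existence lemma for context runs of `Apro`. -/
lemma lemD : ∀ (c d : Ctx A) (t : Term A),
    Nonempty (CRun (Apro M) c (reachSet M t, prodSet M (d.comp c))
      (reachSet M (c.plug t), prodSet M d)) := by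
  intro c
  induction c with
  | hole =>
    intro d t
    rw [comp_hole]
    exact ⟨.hole _⟩
  | node a i c ts ih =>
    intro d t
    set ts'' : Fin (A.ar a) → Term A := Function.update ts i (c.plug t) with hts
    set qs : Fin (A.ar a) → Set Q × Set Q :=
      fun j => (reachSet M (ts'' j), prodSet M (d.comp (.node a j .hole ts''))) with hqs
    have hsnd : ∀ j, (qs j).2 = F2 M a j (fun k => reachSet M (ts'' k)) (prodSet M d) := by
      intro j
      show prodSet M (d.comp (.node a j .hole ts'')) = _
      rw [prodSet_eq, prodC_comp, prodC_node, prodC_hole, ← prodSet_eq]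
    have htr : (Apro M).trans a qs (reachSet M (.node a ts''), prodSet M d) := by
      refine ⟨⟨reachSet_node M a ts'', hsnd⟩, ⟨⟨.node a ts'', rfl⟩, ⟨d, rfl⟩⟩, fun j => ?_⟩
      exact ⟨⟨ts'' j, rfl⟩, ⟨d.comp (.node a j .hole ts''), rfl⟩⟩
    have hqsi : qs i = (reachSet M (c.plug t), prodSet M (d.comp (.node a i .hole ts''))) := by
      refine Prod.ext ?_ rfl
      show reachSet M (ts'' i) = _
      rw [hts, Function.update_self]
    have hholeS : prodSet M ((d.comp (.node a i .hole ts'')).comp c) =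
        prodSet M (d.comp (.node a i c ts)) := by
      rw [comp_assoc]
      show prodSet M (d.comp (.node a i c ts'')) = _
      rw [prodSet_eq, prodSet_eq, prodC_comp, prodC_comp, prodC_node, prodC_node]
      exact congrArg (prodC M c) (F2_congr M (fun k hk => by
        rw [hts, Function.update_of_ne hk]) rfl)
    obtain ⟨hc⟩ := ih (d.comp (.node a i .hole ts'')) t
    rw [← hqsi, hholeS] at hc
    have hrs : ∀ j, j ≠ i → Nonempty (RunOf (Apro M) (ts j) (qs j)) := by
      intro j hj
      have : qs j = (reachSet M (ts j), prodSet M (d.comp (.node a j .hole ts''))) := by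
        rw [hqs]
        refine Prod.ext ?_ rfl
        show reachSet M (ts'' j) = _
        rw [hts, Function.update_of_ne hj]
      rw [this]
      exact lemB M (ts j) _
    exact ⟨.node a i c ts qs _ _ htr hc fun j hj => (hrs j hj).some⟩

end Aux

/-- for every `P ∈ Productive` and every term `t` there is exactly one
run of `A_pro` over `t` whose root state has second component `P`, and its root state is
`(Reach(t), P)`; dually, for every `R ∈ Reachable` and every context `c` there is exactly
one accepting run of `A_pro` over `c` whose hole state has first component `R`, and its
hole state is `(R, Prod(c))`. -/
theorem apro_unique_runs {A : RankedAlphabet} {Q : Type} (M : WTA A Q) :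
    (∀ P ∈ ProductiveS M, ∀ t : Term A,
      Nonempty (RunOf (Apro M) t (reachSet M t, P)) ∧
      ∀ (S S' : Set Q × Set Q) (r : RunOf (Apro M) t S) (r' : RunOf (Apro M) t S'),
        S.2 = P → S'.2 = P → S.1 = reachSet M t ∧ S = S' ∧ HEq r r') ∧
    (∀ R ∈ ReachableS M, ∀ c : Ctx A,
      (∃ Sf, (Apro M).final Sf ∧ Nonempty (CRun (Apro M) c (R, prodSet M c) Sf)) ∧
      ∀ (S S' Sf Sf' : Set Q × Set Q)
        (r : CRun (Apro M) c S Sf) (r' : CRun (Apro M) c S' Sf'),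
        (Apro M).final Sf → (Apro M).final Sf' → S.1 = R → S'.1 = R →
        S.2 = prodSet M c ∧ S = S' ∧ Sf = Sf' ∧ HEq r r') := by
  constructor
  · rintro P ⟨c, rfl⟩ t
    refine ⟨lemB M t c, ?_⟩
    intro S S' r r' h h'
    obtain ⟨h1, h2⟩ := lemA M t S r
    obtain ⟨hSS, hrr⟩ := h2 S' r' (h.trans h'.symm)
    exact ⟨h1, hSS, hrr⟩
  · rintro R ⟨t, rfl⟩ c
    constructor
    · refine ⟨(reachSet M (c.plug t), {q | M.final q}), ⟨rfl, ⟨c.plug t, rfl⟩⟩, ?_⟩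
      obtain ⟨r⟩ := lemD M c .hole t
      rw [prodSet_hole] at r
      exact ⟨r⟩
    · intro S S' Sf Sf' r r' hf hf' hS hS'
      obtain ⟨_, h2, h3⟩ := lemC M c S Sf r
      have hS2 : S.2 = prodSet M c := by
        rw [h2, hf.1, ← prodSet_eq]
      obtain ⟨hSS, hTT, hrr⟩ := h3 S' Sf' r' (hS.trans hS'.symm)
        (hf.1.trans hf'.1.symm)
      exact ⟨hS2, hSS, hTT, hrr⟩
end
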